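/- arXiv:2106.11080 — 2 statements merged into one kernel-verified Lean document; each statement's English description precedes it below -/
import Mathlib

section
/- Let q be odd, B a symmetric (m−1)×(m−1) matrix over F_q of rank 2t, and A a symmetric m×m matrix of rank 2t whose deletion of the first row and first column equals B. Then A is hyperbolic if and only if B is hyperbolic. Moreover A necessarily has the form A = [[uBuᵀ, uB],[Buᵀ, B]] for some row vector u ∈ F_q^{m−1}. -/
open Matrix
set_option maxHeartbeats 1000000


/-- Two square matrices define equivalent quadratic forms if one form is obtained from the
other by an invertible linear change of variables. -/
def QuadEquiv {F : Type*} [Field F] {n : ℕ} (A B : Matrix (Fin n) (Fin n) F) : Prop :=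
  ∃ L : Matrix (Fin n) (Fin n) F, IsUnit L.det ∧
    ∀ X : Fin n → F, X ⬝ᵥ A.mulVec X = (L.mulVec X) ⬝ᵥ B.mulVec (L.mulVec X)

/-- Matrix of the standard hyperbolic quadratic form `X₁X₂ + ⋯ + X_{2r−1}X_{2r}`
in `n` variables. -/
def stdHyp (F : Type*) [Field F] (n r : ℕ) : Matrix (Fin n) (Fin n) F :=
  Matrix.of fun i j =>
    if i.val % 2 = 0 ∧ j.val = i.val + 1 ∧ j.val < 2 * r then 1 else 0

/-- Matrix of the standard form `a X₁² + b X₁X₂ + c X₂² + X₃X₄ + ⋯ + X_{2r−1}X_{2r}`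
in `n` variables. -/
def stdEll (F : Type*) [Field F] (n r : ℕ) (a b c : F) : Matrix (Fin n) (Fin n) F :=
  Matrix.of fun i j =>
    if i.val = 0 ∧ j.val = 1 then b
    else if i.val = 0 ∧ j.val = 0 then a
    else if i.val = 1 ∧ j.val = 1 then c
    else if 2 ≤ i.val ∧ i.val % 2 = 0 ∧ j.val = i.val + 1 ∧ j.val < 2 * r then 1
    else 0

/-- A matrix is hyperbolic (of even rank `2r`) if its associated quadratic form is equivalent
to `k(X₁X₂ + ⋯ + X_{2r−1}X_{2r})` for some nonzero constant `k`. -/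
def IsHyp {F : Type*} [Field F] {n : ℕ} (A : Matrix (Fin n) (Fin n) F) (r : ℕ) : Prop :=
  ∃ k : F, k ≠ 0 ∧ QuadEquiv A (k • stdHyp F n r)

/-- A matrix is elliptic (of even rank `2r`) if its associated quadratic form is equivalent to
`k(f(X₁,X₂) + X₃X₄ + ⋯ + X_{2r−1}X_{2r})` for some nonzero `k` and some irreducible binary
quadratic `f(X,Y) = aX² + bXY + cY²`; over a finite field of odd order, irreducibility of `f`
is precisely the condition that the discriminant `b² − 4ac` is a non-square. -/
def IsEll {F : Type*} [Field F] {n : ℕ} (A : Matrix (Fin n) (Fin n) F) (r : ℕ) : Prop :=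
  ∃ k a b c : F, k ≠ 0 ∧ ¬ IsSquare (b ^ 2 - 4 * a * c) ∧
    QuadEquiv A (k • stdEll F n r a b c)

section Aux

variable {F : Type*} [Field F]

lemma mulVec_stdHyp {n t : ℕ} (hn : 2 * t ≤ n) (Y : Fin n → F) (i : Fin n) :
    (stdHyp F n t).mulVec Y i =
      if h : i.val % 2 = 0 ∧ i.val + 1 < 2 * t then Y ⟨i.val + 1, by omega⟩ else 0 := by
  rw [mulVec, dotProduct]
  by_cases h : i.val % 2 = 0 ∧ i.val + 1 < 2 * t
  · rw [dif_pos h]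
    rw [Finset.sum_eq_single_of_mem (⟨i.val + 1, by omega⟩ : Fin n) (Finset.mem_univ _)]
    · simp [stdHyp, h]
    · intro j _ hj
      have : stdHyp F n t i j = 0 := by
        simp only [stdHyp, of_apply, ite_eq_right_iff]
        intro hc
        exact absurd (Fin.ext hc.2.1) hj
      rw [this, zero_mul]
  · rw [dif_neg h]
    apply Finset.sum_eq_zero
    intro j _
    have : stdHyp F n t i j = 0 := by
      simp only [stdHyp, of_apply, ite_eq_right_iff]
      intro hc
      exact absurd ⟨hc.1, by omega⟩ h
    rw [this, zero_mul]

lemma stdHyp_form {n t : ℕ} (hn : 2 * t ≤ n) (Y : Fin n → F) :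
    Y ⬝ᵥ (stdHyp F n t).mulVec Y =
      ∑ i ∈ Finset.range (2 * t), if h : i % 2 = 0 ∧ i + 1 < 2 * t then
        Y ⟨i, by omega⟩ * Y ⟨i + 1, by omega⟩ else 0 := by
  have : Y ⬝ᵥ (stdHyp F n t).mulVec Y =
      ∑ i ∈ Finset.range n, if h : i % 2 = 0 ∧ i + 1 < 2 * t ∧ i < n then
        Y ⟨i, h.2.2⟩ * Y ⟨i + 1, by omega⟩ else 0 := by
    rw [dotProduct, ← Fin.sum_univ_eq_sum_range]
    refine Finset.sum_congr rfl fun i _ => ?_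
    rw [mulVec_stdHyp hn]
    by_cases h : i.val % 2 = 0 ∧ i.val + 1 < 2 * t
    · rw [dif_pos h, dif_pos ⟨h.1, h.2, i.isLt⟩]
    · rw [dif_neg h, dif_neg (by tauto), mul_zero]
  rw [this]
  rw [← Finset.sum_subset (Finset.range_subset_range.2 hn)]
  · refine Finset.sum_congr rfl fun i hi => ?_
    have hi' := Finset.mem_range.1 hi
    by_cases h : i % 2 = 0 ∧ i + 1 < 2 * t
    · rw [dif_pos h, dif_pos ⟨h.1, h.2, by omega⟩]
    · rw [dif_neg (by tauto), dif_neg h]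
  · intro i _ hi
    rw [dif_neg]
    rintro ⟨-, h2, -⟩
    exact hi (Finset.mem_range.2 (by omega))

lemma hyp_agree {n n' t : ℕ} (hn : 2 * t ≤ n) (hn' : 2 * t ≤ n') (Y : Fin n → F)
    (Z : Fin n' → F)
    (hYZ : ∀ i (hi : i < 2 * t), Y ⟨i, by omega⟩ = Z ⟨i, by omega⟩) :
    Y ⬝ᵥ (stdHyp F n t).mulVec Y = Z ⬝ᵥ (stdHyp F n' t).mulVec Z := by
  rw [stdHyp_form hn, stdHyp_form hn']
  refine Finset.sum_congr rfl fun i hi => ?_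
  have hi' := Finset.mem_range.1 hi
  by_cases h : i % 2 = 0 ∧ i + 1 < 2 * t
  · rw [dif_pos h, dif_pos h, hYZ i (by omega), hYZ (i+1) (by omega)]
  · rw [dif_neg h, dif_neg h]

lemma dp_swap {m : ℕ} (B : Matrix (Fin m) (Fin m) F) (hsymm : ∀ i j, B i j = B j i)
    (v w : Fin m → F) : v ⬝ᵥ B.mulVec w = w ⬝ᵥ B.mulVec v := by
  simp only [dotProduct, mulVec, Finset.mul_sum]
  rw [Finset.sum_comm]
  refine Finset.sum_congr rfl fun i _ => Finset.sum_congr rfl fun j _ => ?_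
  rw [hsymm j i]; ring

lemma quad_split {m : ℕ} (A : Matrix (Fin (m+1)) (Fin (m+1)) F)
    (B : Matrix (Fin m) (Fin m) F) (u : Fin m → F)
    (hsymm : ∀ i j, B i j = B j i)
    (hsub : ∀ i j, A i.succ j.succ = B i j)
    (h00 : A 0 0 = u ⬝ᵥ B.mulVec u)
    (h0j : ∀ j, A 0 j.succ = Matrix.vecMul u B j)
    (hi0 : ∀ i, A i.succ 0 = Matrix.vecMul u B i)
    (X : Fin (m+1) → F) :
    X ⬝ᵥ A.mulVec X =
      (fun i => X i.succ + X 0 * u i) ⬝ᵥ B.mulVec (fun i => X i.succ + X 0 * u i) := by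
  set x : Fin m → F := fun i => X i.succ with hx
  have hY : (fun i => X i.succ + X 0 * u i) = x + X 0 • u := by
    funext i; simp [hx, mul_comm]
  rw [hY]
  have hrhs : (x + X 0 • u) ⬝ᵥ B.mulVec (x + X 0 • u) =
      x ⬝ᵥ B.mulVec x + X 0 * (x ⬝ᵥ B.mulVec u) + X 0 * (u ⬝ᵥ B.mulVec x)
        + X 0 * (X 0 * (u ⬝ᵥ B.mulVec u)) := by
    rw [mulVec_add, mulVec_smul, dotProduct_add, add_dotProduct, add_dotProduct,
      dotProduct_smul, smul_dotProduct, smul_dotProduct, dotProduct_smul]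
    simp only [smul_eq_mul]; ring
  rw [hrhs]
  have hmv0 : A.mulVec X 0 = (u ⬝ᵥ B.mulVec u) * X 0 + Matrix.vecMul u B ⬝ᵥ x := by
    rw [mulVec, dotProduct, Fin.sum_univ_succ, h00]
    simp only [h0j]; rfl
  have hmvs : ∀ i : Fin m, A.mulVec X i.succ = Matrix.vecMul u B i * X 0 + B.mulVec x i := by
    intro i
    rw [mulVec, dotProduct, Fin.sum_univ_succ, hi0]
    simp only [hsub]; rfl
  have hlhs : X ⬝ᵥ A.mulVec X = X 0 * ((u ⬝ᵥ B.mulVec u) * X 0 + Matrix.vecMul u B ⬝ᵥ x)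
      + ∑ i : Fin m, x i * (Matrix.vecMul u B i * X 0 + B.mulVec x i) := by
    rw [dotProduct, Fin.sum_univ_succ, hmv0]
    exact congrArg _ (Finset.sum_congr rfl fun i _ => by rw [hmvs i])
  rw [hlhs]
  have hsplit : ∑ i : Fin m, x i * (Matrix.vecMul u B i * X 0 + B.mulVec x i)
      = (x ⬝ᵥ Matrix.vecMul u B) * X 0 + x ⬝ᵥ B.mulVec x := by
    rw [Finset.sum_congr rfl (fun i _ => mul_add (x i) _ _), Finset.sum_add_distrib]
    have h1 : ∑ i : Fin m, x i * (Matrix.vecMul u B i * X 0)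
        = (x ⬝ᵥ Matrix.vecMul u B) * X 0 := by
      rw [dotProduct, Finset.sum_mul]
      exact Finset.sum_congr rfl fun i _ => by ring
    rw [h1]; rfl
  rw [hsplit]
  have e1 : Matrix.vecMul u B ⬝ᵥ x = u ⬝ᵥ B.mulVec x := (dotProduct_mulVec u B x).symm
  have e2 : x ⬝ᵥ Matrix.vecMul u B = u ⬝ᵥ B.mulVec x := by
    rw [dotProduct_comm]; exact (dotProduct_mulVec u B x).symm
  have e3 : u ⬝ᵥ B.mulVec x = x ⬝ᵥ B.mulVec u := dp_swap B hsymm u x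
  rw [e1, e2, e3]
  ring

lemma exists_row_comb {m t : ℕ} (A : Matrix (Fin (m+1)) (Fin (m+1)) F)
    (hrA : A.rank = 2 * t)
    (B : Matrix (Fin m) (Fin m) F) (hB : B = A.submatrix Fin.succ Fin.succ)
    (hrB : B.rank = 2 * t) :
    ∃ c : Fin m → F, ∑ i : Fin m, c i • A i.succ = A 0 := by
  classical
  set T : Submodule F (Fin (m+1) → F) := Submodule.span F (Set.range A) with hT
  set S : Submodule F (Fin (m+1) → F) :=
    Submodule.span F (Set.range fun i : Fin m => A i.succ) with hS
  have hST : S ≤ T := Submodule.span_mono (by rintro _ ⟨i, rfl⟩; exact ⟨i.succ, rfl⟩)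
  have hfT : Module.finrank F T = 2 * t := by
    exact A.rank_eq_finrank_span_row.symm.trans hrA
  set R : (Fin (m+1) → F) →ₗ[F] (Fin m → F) := LinearMap.funLeft F F Fin.succ with hR
  have hmap : Submodule.map R S = Submodule.span F (Set.range B) := by
    rw [hS, Submodule.map_span, ← Set.range_comp]
    congr 1
    apply congrArg
    funext i
    funext j
    simp [hR, hB, LinearMap.funLeft, Function.comp]
  have h2 : 2 * t ≤ Module.finrank F S := by
    have : Module.finrank F (Submodule.map R S) = 2 * t := by
      rw [hmap]; exact B.rank_eq_finrank_span_row.symm.trans hrB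
    calc 2 * t = Module.finrank F (Submodule.map R S) := this.symm
      _ ≤ Module.finrank F S := Submodule.finrank_map_le _ _
  have hSeq : S = T := Submodule.eq_of_le_of_finrank_le hST (hfT ▸ h2)
  have hmem : A 0 ∈ S := by
    rw [hSeq, hT]
    exact Submodule.subset_span ⟨0, rfl⟩
  rwa [hS, Submodule.mem_span_range_iff_exists_fun] at hmem

lemma hyp_forward {m t : ℕ} (h2t : 2 * t ≤ m)
    (A : Matrix (Fin (m+1)) (Fin (m+1)) F) (B : Matrix (Fin m) (Fin m) F) (u : Fin m → F)
    (hq : ∀ X : Fin (m+1) → F, X ⬝ᵥ A.mulVec X =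
      (fun i => X i.succ + X 0 * u i) ⬝ᵥ B.mulVec (fun i => X i.succ + X 0 * u i))
    (hBhyp : IsHyp B t) : IsHyp A t := by
  classical
  obtain ⟨k, hk, L, hL, hLq⟩ := hBhyp
  set ψ : (Fin (m+1) → F) →ₗ[F] (Fin m → F) :=
    LinearMap.funLeft F F Fin.succ +
      (LinearMap.toSpanSingleton F (Fin m → F) u).comp (LinearMap.proj 0) with hψ
  have hψa : ∀ X : Fin (m+1) → F, ψ X = fun i => X i.succ + X 0 * u i := by
    intro X; funext i
    simp [hψ, LinearMap.funLeft_apply, LinearMap.toSpanSingleton_apply]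
  set Φ : (Fin (m+1) → F) →ₗ[F] (Fin (m+1) → F) :=
    LinearMap.pi (fun j : Fin (m+1) =>
      if h : (j : ℕ) < m then
        (LinearMap.proj (⟨j, h⟩ : Fin m)).comp ((Matrix.mulVecLin L).comp ψ)
      else LinearMap.proj (0 : Fin (m+1))) with hΦ
  have hΦa1 : ∀ (X : Fin (m+1) → F) (j : Fin (m+1)) (h : (j : ℕ) < m),
      Φ X j = L.mulVec (ψ X) ⟨j, h⟩ := by
    intro X j h
    simp [hΦ, LinearMap.pi_apply, dif_pos h]
  have hΦa2 : ∀ X : Fin (m+1) → F, Φ X (Fin.last m) = X 0 := by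
    intro X
    have : ¬ ((Fin.last m : Fin (m+1)) : ℕ) < m := by simp
    simp [hΦ, LinearMap.pi_apply, dif_neg this]
  have hLinj : Function.Injective L.mulVec :=
    Matrix.mulVec_injective_iff_isUnit.2 ((Matrix.isUnit_iff_isUnit_det L).2 hL)
  have hinj : Function.Injective Φ := by
    rw [← LinearMap.ker_eq_bot, LinearMap.ker_eq_bot']
    intro X hX0
    have h0 : X 0 = 0 := by rw [← hΦa2 X, hX0]; rfl
    have hsz : ψ X = 0 := by
      apply hLinj
      rw [mulVec_zero]
      funext i
      have := hΦa1 X ⟨i.val, by omega⟩ (by simpa using i.isLt)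
      rw [hX0] at this
      simpa using this.symm
    funext j
    refine Fin.cases ?_ ?_ j
    · exact h0
    · intro i
      have := congrFun (hψa X) i
      rw [hsz] at this
      have h0' : (0 : Fin m → F) i = X i.succ + X 0 * u i := this
      rw [h0] at h0'
      simpa using h0'.symm
  set M := LinearMap.toMatrix' Φ with hM
  have hMv : ∀ X, M.mulVec X = Φ X := by
    intro X; rw [hM, ← Matrix.toLin'_apply, Matrix.toLin'_toMatrix']
  refine ⟨k, hk, M, ?_, ?_⟩
  · refine (Matrix.isUnit_iff_isUnit_det M).1 (Matrix.mulVec_injective_iff_isUnit.1 ?_)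
    intro X Y h
    exact hinj (by rw [← hMv, ← hMv, h])
  · intro X
    rw [hq X, ← hψa X, hLq (ψ X), hMv]
    rw [smul_mulVec, dotProduct_smul, smul_mulVec, dotProduct_smul]
    congr 1
    refine hyp_agree h2t (by omega) _ _ (fun i hi => ?_)
    exact (hΦa1 X ⟨i, by omega⟩ (by simpa using (by omega : i < m))).symm

lemma hyp_backward {m t : ℕ} (hq2 : (2 : F) ≠ 0) (h2t : 2 * t ≤ m)
    (A : Matrix (Fin (m+1)) (Fin (m+1)) F) (B : Matrix (Fin m) (Fin m) F) (u : Fin m → F)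
    (hsymm : ∀ i j, B i j = B j i) (hrB : B.rank = 2 * t)
    (hq : ∀ X : Fin (m+1) → F, X ⬝ᵥ A.mulVec X =
      (fun i => X i.succ + X 0 * u i) ⬝ᵥ B.mulVec (fun i => X i.succ + X 0 * u i))
    (hAhyp : IsHyp A t) : IsHyp B t := by
  classical
  obtain ⟨k, hk, M, hM, hMq⟩ := hAhyp
  set ι : (Fin m → F) →ₗ[F] (Fin (m+1) → F) :=
    LinearMap.pi (fun j : Fin (m+1) =>
      if h : (j : ℕ) = 0 then 0 else LinearMap.proj (⟨j.val - 1, by omega⟩ : Fin m)) with hι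
  have hι0 : ∀ x, ι x 0 = 0 := by intro x; simp [hι, LinearMap.pi_apply]
  have hιs : ∀ (x : Fin m → F) (i : Fin m), ι x i.succ = x i := by
    intro x i
    have hne : ¬ ((i.succ : Fin (m+1)) : ℕ) = 0 := by simp
    simp only [hι, LinearMap.pi_apply, dif_neg hne, LinearMap.proj_apply]
    congr 1
  have hqB : ∀ x : Fin m → F, x ⬝ᵥ B.mulVec x =
      k * ((M.mulVec (ι x)) ⬝ᵥ (stdHyp F (m+1) t).mulVec (M.mulVec (ι x))) := by
    intro x
    have h1 := hq (ι x)
    have h2 : (fun i => ι x i.succ + ι x 0 * u i) = x := by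
      funext i; rw [hιs, hι0]; ring
    rw [h2] at h1
    rw [← h1, hMq (ι x), smul_mulVec, dotProduct_smul, smul_eq_mul]
  set p : (Fin m → F) →ₗ[F] (Fin (2*t) → F) :=
    LinearMap.pi (fun i : Fin (2*t) =>
      (LinearMap.proj (⟨i.val, by omega⟩ : Fin (m+1))).comp ((Matrix.mulVecLin M).comp ι))
    with hp
  have hpa : ∀ (x : Fin m → F) (i : Fin (2*t)), p x i = M.mulVec (ι x) ⟨i.val, by omega⟩ := by
    intro x i; simp [hp, LinearMap.pi_apply]
  have hker : ∀ x, p x = 0 → B.mulVec x = 0 := by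
    intro x hx
    have hcoord : ∀ (i : ℕ) (hi : i < 2 * t), M.mulVec (ι x) ⟨i, by omega⟩ = 0 := by
      intro i hi
      have := congrFun hx ⟨i, hi⟩
      rw [hpa] at this
      exact this
    have hHY : (stdHyp F (m+1) t).mulVec (M.mulVec (ι x)) = 0 := by
      funext i
      rw [mulVec_stdHyp (by omega)]
      split
      · next h => exact hcoord _ h.2
      · rfl
    have hz : ∀ y : Fin m → F, y ⬝ᵥ B.mulVec x = 0 := by
      intro y
      have hxy := hqB (x + y)
      have hxx := hqB x
      have hyy := hqB y
      set Y := M.mulVec (ι x) with hYdef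
      set Z := M.mulVec (ι y) with hZdef
      have hadd : M.mulVec (ι (x + y)) = Y + Z := by
        rw [map_add, mulVec_add]
      rw [hadd] at hxy
      have hBexp : (x + y) ⬝ᵥ B.mulVec (x + y) =
          x ⬝ᵥ B.mulVec x + y ⬝ᵥ B.mulVec y + 2 * (y ⬝ᵥ B.mulVec x) := by
        rw [mulVec_add, dotProduct_add, add_dotProduct, add_dotProduct,
          dp_swap B hsymm x y]
        ring
      have hYHZ : (Y + Z) ⬝ᵥ (stdHyp F (m+1) t).mulVec (Y + Z) =
          Y ⬝ᵥ (stdHyp F (m+1) t).mulVec Y + Z ⬝ᵥ (stdHyp F (m+1) t).mulVec Z := by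
        rw [mulVec_add, dotProduct_add, add_dotProduct, add_dotProduct, hHY]
        have hZY : Y ⬝ᵥ (stdHyp F (m+1) t).mulVec Z = 0 := by
          rw [dotProduct]
          apply Finset.sum_eq_zero
          intro i _
          rw [mulVec_stdHyp (by omega)]
          split
          · next h =>
            have : Y i = 0 := by
              have := hcoord i.val (by omega)
              simpa using this
            rw [this, zero_mul]
          · rw [mul_zero]
        rw [hZY]
        simp
      rw [hBexp, hYHZ, mul_add, ← hxx, ← hyy] at hxy
      have h2z : 2 * (y ⬝ᵥ B.mulVec x) = 0 := add_eq_left.mp hxy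
      rcases mul_eq_zero.1 h2z with h | h
      · exact absurd h hq2
      · exact h
    funext i
    have := hz (Pi.single i 1)
    rw [dotProduct] at this
    simpa [Pi.single_apply] using this
  have hkerle : LinearMap.ker p ≤ LinearMap.ker B.mulVecLin := by
    intro x hx
    rw [LinearMap.mem_ker] at *
    exact hker x hx
  have hrBr : Module.finrank F (LinearMap.range B.mulVecLin) = 2 * t := by
    rw [← Matrix.rank]; exact hrB
  have hrnB := LinearMap.finrank_range_add_finrank_ker B.mulVecLin
  have hrnp := LinearMap.finrank_range_add_finrank_ker p
  rw [Module.finrank_pi, Fintype.card_fin] at hrnB hrnp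
  have hkerp_le : Module.finrank F (LinearMap.ker p) ≤
      Module.finrank F (LinearMap.ker B.mulVecLin) := Submodule.finrank_mono hkerle
  have hrangep_le : Module.finrank F (LinearMap.range p) ≤ 2 * t := by
    have := Submodule.finrank_le (LinearMap.range p)
    rwa [Module.finrank_pi, Fintype.card_fin] at this
  have hrangep : Module.finrank F (LinearMap.range p) = 2 * t := by omega
  have hpsurj : LinearMap.range p = ⊤ := by
    apply Submodule.eq_top_of_finrank_eq
    rw [hrangep, Module.finrank_pi, Fintype.card_fin]
  obtain ⟨s, hs⟩ := p.exists_rightInverse_of_surjective hpsurj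
  have hsapp : ∀ z, p (s z) = z := fun z => congrFun (congrArg DFunLike.coe hs) z
  have hdim : Module.finrank F (LinearMap.ker p) = m - 2 * t := by omega
  set b : Module.Basis (Fin (m - 2*t)) F (LinearMap.ker p) :=
    (Module.finBasis F (LinearMap.ker p)).reindex (finCongr hdim) with hb
  set π : (Fin m → F) →ₗ[F] (LinearMap.ker p) :=
    LinearMap.codRestrict (LinearMap.ker p) (LinearMap.id - s.comp p)
      (fun x => by
        rw [LinearMap.mem_ker]
        simp [hsapp]) with hπ
  have hπa : ∀ x : Fin m → F, (π x : Fin m → F) = x - s (p x) := fun x => rfl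
  set Φ : (Fin m → F) →ₗ[F] (Fin m → F) :=
    LinearMap.pi (fun j : Fin m =>
      if h : (j : ℕ) < 2 * t then (LinearMap.proj (⟨j, h⟩ : Fin (2*t))).comp p
      else (Finsupp.lapply (⟨j.val - 2 * t, by omega⟩ : Fin (m - 2*t))).comp
        (b.repr.toLinearMap.comp π)) with hΦ
  have hΦa1 : ∀ (x : Fin m → F) (j : Fin m) (h : (j : ℕ) < 2 * t),
      Φ x j = p x ⟨j, h⟩ := by
    intro x j h
    simp [hΦ, LinearMap.pi_apply, dif_pos h]
  have hΦa2 : ∀ (x : Fin m → F) (j : Fin m) (h : ¬ (j : ℕ) < 2 * t),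
      Φ x j = b.repr (π x) ⟨j.val - 2 * t, by omega⟩ := by
    intro x j h
    simp [hΦ, LinearMap.pi_apply, dif_neg h]
  have hinj : Function.Injective Φ := by
    rw [← LinearMap.ker_eq_bot, LinearMap.ker_eq_bot']
    intro x hx0
    have hpz : p x = 0 := by
      funext i
      have := hΦa1 x ⟨i.val, by omega⟩ (by simpa using i.isLt)
      rw [hx0] at this
      simpa using this.symm
    have hπx : (π x : Fin m → F) = x := by
      rw [hπa, hpz, map_zero, sub_zero]
    have hrepr : b.repr (π x) = 0 := by
      ext l
      have hl : (2 * t + l.val : ℕ) < m := by omega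
      have := hΦa2 x ⟨2 * t + l.val, hl⟩ (by show ¬ (2 * t + l.val) < 2 * t; omega)
      rw [hx0] at this
      have h0 : (0 : F) = b.repr (π x) ⟨2 * t + l.val - 2 * t, by omega⟩ := this
      have hll : (⟨2 * t + l.val - 2 * t, by omega⟩ : Fin (m - 2*t)) = l := by
        ext; simp
      rw [hll] at h0
      simpa using h0.symm
    have : π x = 0 := (LinearEquiv.map_eq_zero_iff b.repr).mp hrepr
    have : (π x : Fin m → F) = 0 := by rw [this]; rfl
    rw [hπx] at this
    exact this
  set L := LinearMap.toMatrix' Φ with hL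
  have hLv : ∀ x, L.mulVec x = Φ x := by
    intro x; rw [hL, ← Matrix.toLin'_apply, Matrix.toLin'_toMatrix']
  refine ⟨k, hk, L, ?_, ?_⟩
  · refine (Matrix.isUnit_iff_isUnit_det L).1 (Matrix.mulVec_injective_iff_isUnit.1 ?_)
    intro x y h
    exact hinj (by rw [← hLv, ← hLv, h])
  · intro x
    rw [hqB x, hLv]
    rw [smul_mulVec, dotProduct_smul, smul_eq_mul]
    congr 1
    refine hyp_agree (by omega) h2t _ _ (fun i hi => ?_)
    rw [hΦa1 x ⟨i, by omega⟩ (by simpa using hi)]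
    rw [hpa]

end Aux

/-- If `A` is symmetric of rank `2t` and deleting its first row and column gives `B` also of
rank `2t`, then `A` is hyperbolic iff `B` is hyperbolic, and `A` has the form
`[[u B uᵀ, u B], [B uᵀ, B]]` for some row vector `u`. -/
theorem border_equal_rank (F : Type*) [Field F] [Fintype F] (hq : Odd (Fintype.card F))
    (m t : ℕ)
    (A : Matrix (Fin (m + 1)) (Fin (m + 1)) F) (hA : A.IsSymm) (hrA : A.rank = 2 * t)
    (B : Matrix (Fin m) (Fin m) F) (hB : B = A.submatrix Fin.succ Fin.succ)
    (hrB : B.rank = 2 * t) :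
    (IsHyp A t ↔ IsHyp B t) ∧
    ∃ u : Fin m → F,
      A 0 0 = u ⬝ᵥ B.mulVec u ∧
      (∀ j : Fin m, A 0 j.succ = Matrix.vecMul u B j) ∧
      (∀ i : Fin m, A i.succ 0 = Matrix.vecMul u B i) := by
  classical
  have hq2 : (2 : F) ≠ 0 := by
    apply Ring.two_ne_zero
    intro hchar
    have h1 := FiniteField.even_card_of_char_two hchar
    have h2 := Nat.odd_iff.mp hq
    omega
  have h2t : 2 * t ≤ m := hrB ▸ B.rank_le_height
  have hsub : ∀ i j, A i.succ j.succ = B i j := by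
    intro i j; rw [hB]; rfl
  have hsymm : ∀ i j, B i j = B j i := by
    intro i j
    rw [hB, Matrix.submatrix_apply, Matrix.submatrix_apply]
    exact (hA.apply i.succ j.succ).symm
  obtain ⟨u, hu⟩ := exists_row_comb A hrA B hB hrB
  have hall : ∀ j, A 0 j = ∑ i : Fin m, u i * A i.succ j := by
    intro j
    rw [← hu]
    simp [Finset.sum_apply]
  have h0j : ∀ j : Fin m, A 0 j.succ = Matrix.vecMul u B j := by
    intro j
    rw [hall j.succ, vecMul, dotProduct]
    exact Finset.sum_congr rfl fun i _ => by rw [hsub]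
  have hi0 : ∀ i : Fin m, A i.succ 0 = Matrix.vecMul u B i := by
    intro i
    rw [show A i.succ 0 = A 0 i.succ from (hA.apply i.succ 0).symm]
    exact h0j i
  have h00 : A 0 0 = u ⬝ᵥ B.mulVec u := by
    rw [hall 0, dotProduct]
    refine Finset.sum_congr rfl fun i _ => ?_
    rw [hi0 i, mulVec, vecMul]
    congr 1
    rw [dotProduct, dotProduct]
    exact Finset.sum_congr rfl fun j _ => by rw [hsymm i j]; ring
  have hqs := quad_split A B u hsymm hsub h00 h0j hi0
  exact ⟨⟨hyp_backward hq2 h2t A B u hsymm hrB hqs,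
    hyp_forward h2t A B u hqs⟩, u, h00, h0j, hi0⟩
end

section
/- Let q be odd and c, α ∈ F_q* with both α/c and −α/c non-squares. Then the number of pairs (γ, T) ∈ F_q × F_q with γ² − α/c = T² is exactly q−1, all such pairs have γ ≠ 0 and T ≠ 0, and the set of nonzero square values γ² occurring among solutions has cardinality (q−1)/4. -/
/-- Let `q` be odd and `c, α ∈ F_q*` with both `α/c` and `−α/c` non-squares. Then the number of
pairs `(γ, T)` with `γ² − α/c = T²` is exactly `q − 1`, all such pairs have `γ ≠ 0` and
`T ≠ 0`, and the set of nonzero square values `γ²` occurring among solutions has cardinality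
`(q − 1)/4`. -/
theorem square_difference_pairs (F : Type*) [Field F] [Fintype F]
    (hq : Odd (Fintype.card F)) (c α : F) (hc : c ≠ 0) (hα : α ≠ 0)
    (h1 : ¬ IsSquare (α / c)) (h2 : ¬ IsSquare (-(α / c))) :
    Nat.card {p : F × F // p.1 ^ 2 - α / c = p.2 ^ 2} = Fintype.card F - 1 ∧
    (∀ γ T : F, γ ^ 2 - α / c = T ^ 2 → γ ≠ 0 ∧ T ≠ 0) ∧
    Nat.card {v : F // v ≠ 0 ∧ ∃ γ T : F, γ ^ 2 - α / c = T ^ 2 ∧ v = γ ^ 2} =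
      (Fintype.card F - 1) / 4 := by
  classical
  set d := α / c with hd_def
  have hd : d ≠ 0 := div_ne_zero hα hc
  have htwo : (2 : F) ≠ 0 := by
    intro h
    have hchar : ringChar F = 2 := by
      have hdvd : ringChar F ∣ 2 := (ringChar.spec F 2).mp (by exact_mod_cast h)
      rcases (Nat.dvd_prime Nat.prime_two).mp hdvd with h1 | h1
      · exact absurd h1 CharP.ringChar_ne_one
      · exact h1
    have := FiniteField.even_card_of_char_two hchar
    simp [Nat.odd_iff] at hq
    omega
  -- part 2
  have key : ∀ γ T : F, γ ^ 2 - d = T ^ 2 → γ ≠ 0 ∧ T ≠ 0 := by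
    intro γ T h
    constructor
    · rintro rfl
      exact h2 ⟨T, by rw [← pow_two]; linear_combination h⟩
    · rintro rfl
      exact h1 ⟨γ, by rw [← pow_two]; linear_combination -h⟩
  -- part 1 : equivalence with nonzero elements
  have e : {p : F × F // p.1 ^ 2 - d = p.2 ^ 2} ≃ {u : F // u ≠ 0} :=
    { toFun := fun p => ⟨p.1.1 - p.1.2, by
        intro h0
        have hp := p.2
        have : (p.1.1 - p.1.2) * (p.1.1 + p.1.2) = d := by linear_combination hp
        rw [h0, zero_mul] at this
        exact hd this.symm⟩
      invFun := fun u => ⟨((u + d / u) / 2, (d / u - u) / 2), by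
        have hu : (u : F) ≠ 0 := u.2
        field_simp
        ring⟩
      left_inv := fun p => by
        have hp := p.2
        have hu : p.1.1 - p.1.2 ≠ 0 := by
          intro h0
          have : (p.1.1 - p.1.2) * (p.1.1 + p.1.2) = d := by linear_combination hp
          rw [h0, zero_mul] at this
          exact hd this.symm
        have hdiv : d / (p.1.1 - p.1.2) = p.1.1 + p.1.2 := by
          rw [div_eq_iff hu]
          linear_combination -hp
        apply Subtype.ext
        apply Prod.ext
        · show ((p.1.1 - p.1.2) + d / (p.1.1 - p.1.2)) / 2 = p.1.1
          rw [hdiv]; field_simp; ring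
        · show (d / (p.1.1 - p.1.2) - (p.1.1 - p.1.2)) / 2 = p.1.2
          rw [hdiv]; field_simp; ring
      right_inv := fun u => by
        apply Subtype.ext
        show ((u + d / u) / 2) - ((d / u - u) / 2) = u
        have hu : (u : F) ≠ 0 := u.2
        field_simp
        ring }
  have hcard1 : Nat.card {p : F × F // p.1 ^ 2 - d = p.2 ^ 2} = Fintype.card F - 1 := by
    rw [Nat.card_congr e, Nat.card_eq_fintype_card]
    have : Fintype.card {u : F // u ≠ 0} = Fintype.card F - Fintype.card {u : F // u = 0} :=
      Fintype.card_subtype_compl _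
    rw [this]
    have h01 : Fintype.card {u : F // u = 0} = 1 :=
      Fintype.card_eq_one_iff.mpr ⟨⟨0, rfl⟩, fun y => Subtype.ext y.2⟩
    rw [h01]
  refine ⟨hcard1, key, ?_⟩
  -- part 3
  set P : Finset (F × F) := Finset.univ.filter (fun p => p.1 ^ 2 - d = p.2 ^ 2) with hP_def
  set S : Finset F := Finset.univ.filter (fun γ => ∃ T : F, γ ^ 2 - d = T ^ 2) with hS_def
  set V : Finset F :=
    Finset.univ.filter (fun v => v ≠ 0 ∧ ∃ γ T : F, γ ^ 2 - d = T ^ 2 ∧ v = γ ^ 2) with hV_def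
  have hPcard : P.card = Fintype.card F - 1 := by
    rw [← hcard1, Nat.card_eq_fintype_card, Fintype.card_subtype]
  have hneq : ∀ x : F, x ≠ 0 → x ≠ -x := by
    intro x hx h
    apply hx
    have h2x : 2 * x = 0 := by linear_combination h
    rcases mul_eq_zero.mp h2x with h' | h'
    · exact absurd h' htwo
    · exact h'
  have hPS : P.card = 2 * S.card := by
    have hmaps : ∀ p ∈ P, p.1 ∈ S := by
      intro p hp
      simp only [hP_def, Finset.mem_filter, Finset.mem_univ, true_and] at hp
      simp only [hS_def, Finset.mem_filter, Finset.mem_univ, true_and]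
      exact ⟨p.2, hp⟩
    have hfib : ∀ γ ∈ S, (P.filter (fun p => p.1 = γ)).card = 2 := by
      intro γ hγ
      simp only [hS_def, Finset.mem_filter, Finset.mem_univ, true_and] at hγ
      obtain ⟨T0, hT0⟩ := hγ
      have hT0ne : T0 ≠ 0 := (key γ T0 hT0).2
      have hset : P.filter (fun p => p.1 = γ) = {(γ, T0), (γ, -T0)} := by
        ext p
        simp only [hP_def, Finset.mem_filter, Finset.mem_univ, true_and,
          Finset.mem_insert, Finset.mem_singleton]
        constructor
        · rintro ⟨hp, rfl⟩
          have hzz : (p.2 - T0) * (p.2 + T0) = 0 := by linear_combination hT0 - hp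
          rcases mul_eq_zero.mp hzz with h' | h'
          · left; rw [Prod.ext_iff]; exact ⟨rfl, by linear_combination h'⟩
          · right; rw [Prod.ext_iff]; exact ⟨rfl, by linear_combination h'⟩
        · rintro (rfl | rfl)
          · exact ⟨hT0, rfl⟩
          · exact ⟨by linear_combination hT0, rfl⟩
      rw [hset, Finset.card_insert_of_notMem (by
        simp only [Finset.mem_singleton, Prod.ext_iff, true_and]
        intro h
        exact hneq T0 hT0ne h), Finset.card_singleton]
    calc P.card = ∑ γ ∈ S, (P.filter (fun p => p.1 = γ)).card :=
          Finset.card_eq_sum_card_fiberwise hmaps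
      _ = ∑ _γ ∈ S, 2 := Finset.sum_congr rfl hfib
      _ = 2 * S.card := by rw [Finset.sum_const, smul_eq_mul, mul_comm]
  have hSV : S.card = 2 * V.card := by
    have hmaps : ∀ γ ∈ S, γ ^ 2 ∈ V := by
      intro γ hγ
      simp only [hS_def, Finset.mem_filter, Finset.mem_univ, true_and] at hγ
      obtain ⟨T, hT⟩ := hγ
      simp only [hV_def, Finset.mem_filter, Finset.mem_univ, true_and]
      exact ⟨pow_ne_zero 2 (key γ T hT).1, γ, T, hT, rfl⟩
    have hfib : ∀ v ∈ V, (S.filter (fun γ => γ ^ 2 = v)).card = 2 := by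
      intro v hv
      simp only [hV_def, Finset.mem_filter, Finset.mem_univ, true_and] at hv
      obtain ⟨hv0, γ0, T0, hT0, hvγ⟩ := hv
      have hγ0ne : γ0 ≠ 0 := (key γ0 T0 hT0).1
      have hset : S.filter (fun γ => γ ^ 2 = v) = {γ0, -γ0} := by
        ext γ
        simp only [hS_def, Finset.mem_filter, Finset.mem_univ, true_and,
          Finset.mem_insert, Finset.mem_singleton]
        constructor
        · rintro ⟨_, hγv⟩
          have hzz : (γ - γ0) * (γ + γ0) = 0 := by linear_combination hγv + hvγ
          rcases mul_eq_zero.mp hzz with h' | h'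
          · left; linear_combination h'
          · right; linear_combination h'
        · rintro (rfl | rfl)
          · exact ⟨⟨T0, hT0⟩, hvγ.symm⟩
          · exact ⟨⟨T0, by linear_combination hT0⟩, by linear_combination -hvγ⟩
      rw [hset, Finset.card_insert_of_notMem (by
        simp only [Finset.mem_singleton]
        exact hneq γ0 hγ0ne), Finset.card_singleton]
    calc S.card = ∑ v ∈ V, (S.filter (fun γ => γ ^ 2 = v)).card :=
          Finset.card_eq_sum_card_fiberwise hmaps
      _ = ∑ _v ∈ V, 2 := Finset.sum_congr rfl hfib
      _ = 2 * V.card := by rw [Finset.sum_const, smul_eq_mul, mul_comm]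
  have hVcard : Nat.card {v : F // v ≠ 0 ∧ ∃ γ T : F, γ ^ 2 - d = T ^ 2 ∧ v = γ ^ 2} = V.card := by
    rw [Nat.card_eq_fintype_card, Fintype.card_subtype]
  rw [hVcard]
  omega
end
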